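/- arXiv:0808.3581 — 2 statements merged into one kernel-verified Lean document; each statement's English description precedes it below -/
import Mathlib

section
/- The commutator of the effective single-excitation Hamiltonian E with the operator P satisfies i(E∘P − P∘E) = 4X − 2·id, as linear maps on the space of finitely supported complex sequences. -/
open Complex Finsupp

/-- The position operator `X` on the space of finitely supported complex sequences:
`X δ_l = (l+1) δ_l`. -/
noncomputable def Xop : (ℕ →₀ ℂ) →ₗ[ℂ] (ℕ →₀ ℂ) :=
  Finsupp.linearCombination ℂ fun l : ℕ => ((l : ℂ) + 1) • Finsupp.single l 1

/-- The effective single-excitation Hamiltonian `E`: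
`E δ_l = i (l+1) δ_{l+1} - i l δ_{l-1}` (the second term vanishing for `l = 0`). -/
noncomputable def Eop : (ℕ →₀ ℂ) →ₗ[ℂ] (ℕ →₀ ℂ) :=
  Finsupp.linearCombination ℂ fun l : ℕ =>
    (Complex.I * ((l : ℂ) + 1)) • Finsupp.single (l + 1) 1
      - (Complex.I * (l : ℂ)) • Finsupp.single (l - 1) 1

/-- The momentum-type operator `P`:
`P δ_l = (l+1) δ_{l+1} + l δ_{l-1}` (the second term vanishing for `l = 0`). -/
noncomputable def Pop : (ℕ →₀ ℂ) →ₗ[ℂ] (ℕ →₀ ℂ) :=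
  Finsupp.linearCombination ℂ fun l : ℕ =>
    ((l : ℂ) + 1) • Finsupp.single (l + 1) 1 + (l : ℂ) • Finsupp.single (l - 1) 1



lemma Xop_single (l : ℕ) : Xop (Finsupp.single l 1) = ((l : ℂ) + 1) • Finsupp.single l 1 := by
  simp [Xop, Finsupp.linearCombination_single]

lemma Eop_single (l : ℕ) : Eop (Finsupp.single l 1) =
    (Complex.I * ((l : ℂ) + 1)) • Finsupp.single (l + 1) 1
      - (Complex.I * (l : ℂ)) • Finsupp.single (l - 1) 1 := by
  simp [Eop, Finsupp.linearCombination_single]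

lemma Pop_single (l : ℕ) : Pop (Finsupp.single l 1) =
    ((l : ℂ) + 1) • Finsupp.single (l + 1) 1 + (l : ℂ) • Finsupp.single (l - 1) 1 := by
  simp [Pop, Finsupp.linearCombination_single]

/-- `i [E, P] = 4 X - 2 id` as linear maps on finitely supported complex sequences. -/
theorem commutator_E_P :
    Complex.I • (Eop ∘ₗ Pop - Pop ∘ₗ Eop) = (4 : ℂ) • Xop - (2 : ℂ) • LinearMap.id := by
  refine Finsupp.lhom_ext fun l b => ?_
  have hb : (Finsupp.single l b : ℕ →₀ ℂ) = b • Finsupp.single l 1 := by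
    rw [Finsupp.smul_single, smul_eq_mul, mul_one]
  rw [hb, map_smul, map_smul]
  congr 1
  simp only [LinearMap.smul_apply, LinearMap.sub_apply, LinearMap.comp_apply,
    LinearMap.id_apply]
  rcases l with _ | n
  · rw [Pop_single 0, Eop_single 0, Xop_single 0]
    simp only [Nat.cast_zero, Nat.cast_one, zero_add, mul_zero, zero_smul, add_zero, sub_zero,
      mul_one, one_smul, map_smul]
    rw [Eop_single 1, Pop_single 1]
    simp only [Nat.cast_one, Nat.sub_self]
    simp only [smul_sub, smul_add, smul_smul]
    ring_nf
    simp only [Complex.I_sq]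
    module
  · rw [Pop_single (n+1), Eop_single (n+1), Xop_single (n+1)]
    simp only [Nat.add_sub_cancel, map_add, map_sub, map_smul]
    rw [Eop_single, Eop_single, Pop_single, Pop_single]
    simp only [Nat.add_sub_cancel]
    push_cast
    simp only [smul_sub, smul_add, smul_smul]
    ring_nf
    simp only [Complex.I_sq]
    module
end

section
/- For every real t, every vector φ ∈ V, and every index n ∈ ℕ, the Heisenberg-series for the time-evolved position operator converges coordinatewise and has the closed form: Σ_{k=0}^∞ (t^k / k!) · (ad^k(X) φ)(n) converges (absolutely) and equals the n-th coordinate of [X + (1/2)·sinh(2t)·P + (cosh(2t) − 1)·(X − (1/2)·id)] φ. -/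
open Complex Finsupp

/-- The generator of Heisenberg-picture time evolution: `ad A = i (E ∘ A - A ∘ E)`. -/
noncomputable def adE :
    ((ℕ →₀ ℂ) →ₗ[ℂ] (ℕ →₀ ℂ)) → ((ℕ →₀ ℂ) →ₗ[ℂ] (ℕ →₀ ℂ)) :=
  fun A => Complex.I • (Eop ∘ₗ A - A ∘ₗ Eop)

noncomputable def Qop : (ℕ →₀ ℂ) →ₗ[ℂ] (ℕ →₀ ℂ) :=
  Xop - ((1 : ℂ) / 2) • (LinearMap.id : (ℕ →₀ ℂ) →ₗ[ℂ] (ℕ →₀ ℂ))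

lemma adE_X : adE Xop = Pop := by
  refine Finsupp.lhom_ext' fun l => LinearMap.ext_ring ?_
  rcases l with _ | m <;>
  · simp only [adE, Xop, Pop, Eop, Finsupp.lsingle_apply, LinearMap.comp_apply, LinearMap.smul_apply,
      LinearMap.sub_apply, map_sub, map_add, map_smul, Finsupp.linearCombination_single,
      one_smul, smul_sub, smul_add, smul_smul, Nat.cast_zero, Nat.cast_add, Nat.cast_one,
      Nat.add_sub_cancel, Nat.succ_sub_one]
    ext j
    simp only [Finsupp.coe_sub, Finsupp.coe_add, Finsupp.coe_smul, Pi.sub_apply, Pi.add_apply,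
      Pi.smul_apply, Finsupp.single_apply, smul_eq_mul, Nat.cast_ofNat, Nat.cast_zero,
      Nat.cast_add, Nat.cast_one, mul_ite, mul_one, mul_zero]
    split_ifs <;> push_cast <;> ring_nf <;> simp [Complex.I_sq]

lemma adE_P : adE Pop = (4 : ℂ) • Qop := by
  refine Finsupp.lhom_ext' fun l => LinearMap.ext_ring ?_
  rcases l with _ | m <;>
  · simp only [adE, Xop, Pop, Eop, Qop, Finsupp.lsingle_apply, LinearMap.comp_apply,
      LinearMap.smul_apply, LinearMap.id_apply,
      LinearMap.sub_apply, map_sub, map_add, map_smul, Finsupp.linearCombination_single,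
      one_smul, smul_sub, smul_add, smul_smul, Nat.cast_zero, Nat.cast_add, Nat.cast_one,
      Nat.add_sub_cancel, Nat.succ_sub_one]
    ext j
    simp only [Finsupp.coe_sub, Finsupp.coe_add, Finsupp.coe_smul, Pi.sub_apply, Pi.add_apply,
      Pi.smul_apply, Finsupp.single_apply, smul_eq_mul, Nat.cast_ofNat, Nat.cast_zero,
      Nat.cast_add, Nat.cast_one, mul_ite, mul_one, mul_zero]
    split_ifs <;> push_cast <;> ring_nf <;> simp [Complex.I_sq] <;> ring

lemma adE_smul (c : ℂ) (A : (ℕ →₀ ℂ) →ₗ[ℂ] (ℕ →₀ ℂ)) : adE (c • A) = c • adE A := by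
  simp only [adE]
  ext v
  simp [smul_smul, mul_comm]
  ring

lemma adE_Q : adE Qop = Pop := by
  have hid : adE LinearMap.id = 0 := by
    simp only [adE]
    ext v; simp
  have : Qop = Xop - ((1:ℂ)/2) • LinearMap.id := rfl
  rw [this]
  have hsub : ∀ A B : (ℕ →₀ ℂ) →ₗ[ℂ] (ℕ →₀ ℂ), adE (A - B) = adE A - adE B := by
    intro A B; simp only [adE]; ext v; simp [smul_sub]; ring
  rw [hsub, adE_smul, hid, adE_X, smul_zero]
  ext v
  simp

lemma adE_iter : ∀ m : ℕ,
    adE^[2 * m + 1] Xop = ((4 : ℂ) ^ m) • Pop ∧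
    adE^[2 * m + 2] Xop = ((4 : ℂ) ^ (m + 1)) • Qop := by
  intro m
  induction m with
  | zero =>
    constructor
    · simpa using adE_X
    · have : adE^[2] Xop = adE (adE Xop) := by
        rw [Function.iterate_succ_apply', Function.iterate_one]
      simpa [this, adE_X, adE_P]
  | succ k ih =>
    obtain ⟨h1, h2⟩ := ih
    have e1 : adE^[2 * (k+1) + 1] Xop = adE (adE^[2 * k + 2] Xop) := by
      rw [← Function.iterate_succ_apply' adE]
      norm_num [Nat.mul_succ]
    have e2 : adE^[2 * (k+1) + 2] Xop = adE (adE^[2 * (k+1) + 1] Xop) := by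
      rw [← Function.iterate_succ_apply' adE]
    constructor
    · rw [e1, h2, adE_smul, adE_Q]
    · rw [e2, e1, h2, adE_smul, adE_Q, adE_smul, adE_P, smul_smul, ← pow_succ]

/-- Coordinatewise convergence and closed form of the Heisenberg series of `X`:
for all `t : ℝ`, `φ` and coordinates `n`, the series `Σ_k (t^k/k!) (ad^k(X) φ)(n)`
converges absolutely to the `n`-th coordinate of
`(X + (sinh(2t)/2) P + (cosh(2t) - 1)(X - id/2)) φ`. -/
theorem heisenberg_series_X (t : ℝ) (φ : ℕ →₀ ℂ) (n : ℕ) :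
    Summable (fun k : ℕ => ‖((t ^ k / (k.factorial : ℝ) : ℝ) : ℂ) * ((adE^[k] Xop) φ) n‖) ∧
    HasSum (fun k : ℕ => ((t ^ k / (k.factorial : ℝ) : ℝ) : ℂ) * ((adE^[k] Xop) φ) n)
      (((Xop + ((Real.sinh (2 * t) / 2 : ℝ) : ℂ) • Pop
        + ((Real.cosh (2 * t) - 1 : ℝ) : ℂ) • (Xop - ((1 : ℂ) / 2) • (LinearMap.id : (ℕ →₀ ℂ) →ₗ[ℂ] (ℕ →₀ ℂ)))) φ) n) := by
  set x : ℂ := ((2 * t : ℝ) : ℂ) with hx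
  set a : ℂ := (Qop φ) n with ha
  set b : ℂ := (Pop φ) n with hb
  set c0 : ℂ := (Xop φ) n - a with hc0
  have hfac : ∀ k : ℕ, ((k.factorial : ℂ)) ≠ 0 := fun k => Nat.cast_ne_zero.2 k.factorial_ne_zero
  have hterm : ∀ k : ℕ,
      ((t ^ k / (k.factorial : ℝ) : ℝ) : ℂ) * ((adE^[k] Xop) φ) n
      = (a / 2 + b / 4) * (x ^ k / k.factorial)
        + (a / 2 - b / 4) * ((-x) ^ k / k.factorial)
        + (if k = 0 then c0 else 0) := by
    intro k
    rcases Nat.even_or_odd k with ⟨m, hm⟩ | ⟨m, hm⟩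
    · rcases m with _ | m'
      · have hk : k = 0 := by omega
        subst hk
        simp [hc0, Xop]
        try ring
      · have hk : k = 2 * m' + 2 := by omega
        subst hk
        have hQ := (adE_iter m').2
        rw [hQ]
        have hev : Even (2 * m' + 2) := ⟨m' + 1, by ring⟩
        rw [hev.neg_pow]
        simp only [LinearMap.smul_apply, Finsupp.smul_apply, smul_eq_mul, ← ha,
          if_neg (by omega : ¬ (2 * m' + 2 = 0)), add_zero]
        have hxp : x ^ (2 * m' + 2) = (4 : ℂ) ^ (m' + 1) * (t : ℂ) ^ (2 * m' + 2) := by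
          rw [hx]
          push_cast
          rw [mul_pow]
          congr 1
          rw [show 2 * m' + 2 = 2 * (m' + 1) by ring, pow_mul]
          norm_num
        rw [hxp]
        push_cast
        field_simp
        ring
    · have hk : k = 2 * m + 1 := by omega
      subst hk
      have hP := (adE_iter m).1
      rw [hP]
      have hod : Odd (2 * m + 1) := ⟨m, by ring⟩
      rw [hod.neg_pow]
      simp only [LinearMap.smul_apply, Finsupp.smul_apply, smul_eq_mul, ← hb,
        if_neg (by omega : ¬ (2 * m + 1 = 0)), add_zero]
      have hxp : x ^ (2 * m + 1) = 2 * (4 : ℂ) ^ m * (t : ℂ) ^ (2 * m + 1) := by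
        rw [hx]
        push_cast
        rw [mul_pow]
        congr 1
        rw [pow_succ, pow_mul]
        norm_num
        try ring
      rw [hxp]
      push_cast
      field_simp
      ring
  have h1 : HasSum (fun k : ℕ => (a / 2 + b / 4) * (x ^ k / k.factorial))
      ((a / 2 + b / 4) * Complex.exp x) := by
    rw [Complex.exp_eq_exp_ℂ]
    exact (NormedSpace.expSeries_div_hasSum_exp x).mul_left _
  have h2 : HasSum (fun k : ℕ => (a / 2 - b / 4) * ((-x) ^ k / k.factorial))
      ((a / 2 - b / 4) * Complex.exp (-x)) := by
    rw [Complex.exp_eq_exp_ℂ]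
    exact (NormedSpace.expSeries_div_hasSum_exp (-x)).mul_left _
  have h3 : HasSum (fun k : ℕ => if k = 0 then c0 else 0) c0 := hasSum_ite_eq 0 c0
  have hsum : HasSum (fun k : ℕ => ((t ^ k / (k.factorial : ℝ) : ℝ) : ℂ) * ((adE^[k] Xop) φ) n)
      ((a / 2 + b / 4) * Complex.exp x + (a / 2 - b / 4) * Complex.exp (-x) + c0) := by
    have heq : (fun k : ℕ => ((t ^ k / (k.factorial : ℝ) : ℝ) : ℂ) * ((adE^[k] Xop) φ) n)
        = fun k : ℕ => (a / 2 + b / 4) * (x ^ k / k.factorial)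
          + (a / 2 - b / 4) * ((-x) ^ k / k.factorial) + (if k = 0 then c0 else 0) :=
      funext hterm
    rw [heq]
    exact (h1.add h2).add h3
  constructor
  · have s1 : Summable (fun k : ℕ => ‖a / 2 + b / 4‖ * (‖x‖ ^ k / k.factorial)) :=
      (Real.summable_pow_div_factorial ‖x‖).mul_left _
    have s2 : Summable (fun k : ℕ => ‖a / 2 - b / 4‖ * (‖x‖ ^ k / k.factorial)) :=
      (Real.summable_pow_div_factorial ‖x‖).mul_left _
    have s3 : Summable (fun k : ℕ => if k = 0 then ‖c0‖ else 0) :=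
      (hasSum_ite_eq 0 ‖c0‖).summable
    refine Summable.of_nonneg_of_le (fun k => norm_nonneg _) (fun k => ?_) ((s1.add s2).add s3)
    rw [hterm k]
    have e1 : ‖(a / 2 + b / 4) * (x ^ k / k.factorial)‖
        = ‖a / 2 + b / 4‖ * (‖x‖ ^ k / (k.factorial : ℝ)) := by
      rw [norm_mul, norm_div, norm_pow]
      norm_num
    have e2 : ‖(a / 2 - b / 4) * ((-x) ^ k / k.factorial)‖
        = ‖a / 2 - b / 4‖ * (‖x‖ ^ k / (k.factorial : ℝ)) := by
      rw [norm_mul, norm_div, norm_pow, norm_neg]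
      norm_num
    have e3 : ‖(if k = 0 then c0 else 0 : ℂ)‖ = (if k = 0 then ‖c0‖ else 0) := by
      split_ifs <;> simp
    calc ‖(a / 2 + b / 4) * (x ^ k / k.factorial)
          + (a / 2 - b / 4) * ((-x) ^ k / k.factorial) + (if k = 0 then c0 else 0)‖
        ≤ ‖(a / 2 + b / 4) * (x ^ k / k.factorial)
          + (a / 2 - b / 4) * ((-x) ^ k / k.factorial)‖ + ‖(if k = 0 then c0 else 0 : ℂ)‖ :=
          norm_add_le _ _
      _ ≤ (‖(a / 2 + b / 4) * (x ^ k / k.factorial)‖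
          + ‖(a / 2 - b / 4) * ((-x) ^ k / k.factorial)‖) + ‖(if k = 0 then c0 else 0 : ℂ)‖ := by
          gcongr
          exact norm_add_le _ _
      _ = ‖a / 2 + b / 4‖ * (‖x‖ ^ k / (k.factorial : ℝ))
          + ‖a / 2 - b / 4‖ * (‖x‖ ^ k / (k.factorial : ℝ)) + (if k = 0 then ‖c0‖ else 0) := by
          rw [e1, e2, e3]
  · have hval : (((Xop + ((Real.sinh (2 * t) / 2 : ℝ) : ℂ) • Pop
        + ((Real.cosh (2 * t) - 1 : ℝ) : ℂ) • (Xop - ((1 : ℂ) / 2) • (LinearMap.id : (ℕ →₀ ℂ) →ₗ[ℂ] (ℕ →₀ ℂ)))) φ) n)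
        = (a / 2 + b / 4) * Complex.exp x + (a / 2 - b / 4) * Complex.exp (-x) + c0 := by
      rw [show Xop - ((1 : ℂ) / 2) • (LinearMap.id : (ℕ →₀ ℂ) →ₗ[ℂ] (ℕ →₀ ℂ)) = Qop from rfl]
      simp only [LinearMap.add_apply, LinearMap.smul_apply, Finsupp.add_apply,
        Finsupp.smul_apply, smul_eq_mul, ← ha, ← hb, hc0]
      rw [Real.sinh_eq, Real.cosh_eq, hx, ← Complex.ofReal_neg, ← Complex.ofReal_exp,
        ← Complex.ofReal_exp]
      push_cast
      ring
    rw [hval]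
    exact hsum
end
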